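/- arXiv:1310.4785 — 2 statements merged into one kernel-verified Lean document; each statement's English description precedes it below -/
import Mathlib

section
/- The functions φ₁ and φ₃ of the quadrilateral Lin–Tobiska–Zhou (QLTZ) element are dual to the edge-average degrees of freedom on e₁ and e₃ respectively: ⨍_Q φ₁ = 0, ⨍_{e₁}φ₁ = 1, ⨍_{e₂}φ₁ = ⨍_{e₃}φ₁ = ⨍_{e₄}φ₁ = 0; and ⨍_Q φ₃ = 0, ⨍_{e₃}φ₃ = 1, ⨍_{e₁}φ₃ = ⨍_{e₂}φ₃ = ⨍_{e₄}φ₃ = 0. That is, dᵢ(φ₁) = δ_{i1} and dᵢ(φ₃) = δ_{i3} for i = 0,…,4. -/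
open MeasureTheory

noncomputable section

/-- Vertex a₁ of the reference convex quadrilateral (points written as (η, ξ)). -/
def a1 (α β : ℝ) : ℝ × ℝ := (-1 - α, 1 - β)

/-- Vertex a₂. -/
def a2 (α β : ℝ) : ℝ × ℝ := (-1 + α, -1 + β)

/-- Vertex a₃. -/
def a3 (α β : ℝ) : ℝ × ℝ := (1 - α, -1 - β)

/-- Vertex a₄. -/
def a4 (α β : ℝ) : ℝ × ℝ := (1 + α, 1 + β)

/-- The reference convex quadrilateral Q = conv{a₁, a₂, a₃, a₄}. -/
def Quad (α β : ℝ) : Set (ℝ × ℝ) :=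
  convexHull ℝ {a1 α β, a2 α β, a3 α β, a4 α β}

/-- Average of `u` over the segment from `P` to `R`:
    ⨍ u = ∫_{t ∈ [0,1]} u((1−t)P + tR) dt. -/
def edgeAvg (P R : ℝ × ℝ) (u : ℝ × ℝ → ℝ) : ℝ :=
  ∫ t in (0:ℝ)..1, u ((1 - t) • P + t • R)

/-- Average of `u` over the quadrilateral Q: (∫_Q u dλ)/λ(Q). -/
def quadAvg (α β : ℝ) (u : ℝ × ℝ → ℝ) : ℝ :=
  (∫ p in Quad α β, u p) / (volume (Quad α β)).toReal

/-- The basis function φ₀ of the QLTZ element: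
φ₀ = −3(3ξ² + 3η² − 2αξ − 2βη − (4 + α² + β²))/(2(α² + β² + 3)),
with ξ(p) = p.2 and η(p) = p.1. -/
def phi0 (α β : ℝ) (p : ℝ × ℝ) : ℝ :=
  -3 * (3 * p.2 ^ 2 + 3 * p.1 ^ 2 - 2 * α * p.2 - 2 * β * p.1 - (4 + α ^ 2 + β ^ 2)) /
    (2 * (α ^ 2 + β ^ 2 + 3))

/-- φ₁ = −(3/4)ξ² + ((β−1)/2)η + (3+β²)/4 − ((β²−β+3)/6)φ₀. -/
def phi1 (α β : ℝ) (p : ℝ × ℝ) : ℝ :=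
  -(3 / 4) * p.2 ^ 2 + (β - 1) / 2 * p.1 + (3 + β ^ 2) / 4 -
    (β ^ 2 - β + 3) / 6 * phi0 α β p

/-- φ₂ = −(3/4)η² + ((α−1)/2)ξ + (3+α²)/4 − ((α²−α+3)/6)φ₀. -/
def phi2 (α β : ℝ) (p : ℝ × ℝ) : ℝ :=
  -(3 / 4) * p.1 ^ 2 + (α - 1) / 2 * p.2 + (3 + α ^ 2) / 4 -
    (α ^ 2 - α + 3) / 6 * phi0 α β p

/-- φ₃ = −(3/4)ξ² + ((β+1)/2)η + (3+β²)/4 − ((β²+β+3)/6)φ₀. -/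
def phi3 (α β : ℝ) (p : ℝ × ℝ) : ℝ :=
  -(3 / 4) * p.2 ^ 2 + (β + 1) / 2 * p.1 + (3 + β ^ 2) / 4 -
    (β ^ 2 + β + 3) / 6 * phi0 α β p

/-- φ₄ = −(3/4)η² + ((α+1)/2)ξ + (3+α²)/4 − ((α²+α+3)/6)φ₀. -/
def phi4 (α β : ℝ) (p : ℝ × ℝ) : ℝ :=
  -(3 / 4) * p.1 ^ 2 + (α + 1) / 2 * p.2 + (3 + α ^ 2) / 4 -
    (α ^ 2 + α + 3) / 6 * phi0 α β p


lemma iipoly (g : ℝ → ℝ) (hg : Continuous g) (a b : ℝ) : IntervalIntegrable g volume a b :=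
  hg.intervalIntegrable a b

lemma int_quadratic_to (c A B C : ℝ) :
    ∫ t in (0:ℝ)..c, (A*t^2+B*t+C) = A*c^3/3+B*c^2/2+C*c := by
  have h1 := iipoly (fun t : ℝ => A*t^2) (by continuity) 0 c
  have h2 := iipoly (fun t : ℝ => B*t) (by continuity) 0 c
  have h3 := iipoly (fun _ : ℝ => C) (by continuity) 0 c
  rw [show (fun t : ℝ => A*t^2+B*t+C) = fun t => (A*t^2 + B*t) + C from rfl]
  rw [intervalIntegral.integral_add (h1.add h2) h3,
      intervalIntegral.integral_add h1 h2,
      intervalIntegral.integral_const_mul, intervalIntegral.integral_const_mul,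
      integral_pow]
  simp [integral_id]
  ring

lemma int_quadratic (A B C : ℝ) : ∫ t in (0:ℝ)..1, (A*t^2+B*t+C) = A/3+B/2+C := by
  rw [int_quadratic_to]; ring

lemma int_quartic (A4 A3 A2 A1 A0 : ℝ) :
    ∫ t in (0:ℝ)..1, (A4*t^4+A3*t^3+A2*t^2+A1*t+A0) = A4/5+A3/4+A2/3+A1/2+A0 := by
  have h : ∀ n : ℕ, ∀ A : ℝ, IntervalIntegrable (fun t : ℝ => A*t^n) volume 0 1 :=
    fun n A => iipoly _ (by continuity) 0 1
  rw [show (fun t : ℝ => A4*t^4+A3*t^3+A2*t^2+A1*t+A0)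
      = fun t => (((A4*t^4 + A3*t^3) + A2*t^2) + A1*t^1) + A0*t^0 from by funext t; ring]
  rw [intervalIntegral.integral_add ((((h 4 A4).add (h 3 A3)).add (h 2 A2)).add (h 1 A1)) (h 0 A0),
      intervalIntegral.integral_add (((h 4 A4).add (h 3 A3)).add (h 2 A2)) (h 1 A1),
      intervalIntegral.integral_add ((h 4 A4).add (h 3 A3)) (h 2 A2),
      intervalIntegral.integral_add (h 4 A4) (h 3 A3)]
  simp only [intervalIntegral.integral_const_mul, integral_pow]
  norm_num
  ring
/-- the closed standard simplex in the plane -/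
def Simp : Set (ℝ × ℝ) := {p | 0 ≤ p.1 ∧ 0 ≤ p.2 ∧ p.1 + p.2 ≤ 1}

lemma measSimp : MeasurableSet Simp := by
  apply MeasurableSet.inter
  · exact measurableSet_le measurable_const measurable_fst
  apply MeasurableSet.inter
  · exact measurableSet_le measurable_const measurable_snd
  · exact measurableSet_le (measurable_fst.add measurable_snd) measurable_const

lemma compactSimp : IsCompact Simp := by
  apply (isCompact_Icc (a := ((0:ℝ),(0:ℝ))) (b := (1,1))).of_isClosed_subset
  · have h1 : IsClosed {p : ℝ × ℝ | 0 ≤ p.1} := isClosed_le continuous_const continuous_fst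
    have h2 : IsClosed {p : ℝ × ℝ | 0 ≤ p.2} := isClosed_le continuous_const continuous_snd
    have h3 : IsClosed {p : ℝ × ℝ | p.1 + p.2 ≤ 1} :=
      isClosed_le (continuous_fst.add continuous_snd) continuous_const
    exact (h1.inter (h2.inter h3))
  · rintro ⟨x, y⟩ ⟨hx, hy, hxy⟩
    simp only [Set.mem_Icc, Prod.mk_le_mk]
    exact ⟨⟨hx, hy⟩, by constructor <;> simp at hx hy hxy ⊢ <;> linarith⟩

lemma simplex_integral (c20 c11 c02 c10 c01 c00 : ℝ) :
    ∫ p in Simp, (c20*p.1^2 + c11*p.1*p.2 + c02*p.2^2 + c10*p.1 + c01*p.2 + c00)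
      = c20/12 + c11/24 + c02/12 + c10/6 + c01/6 + c00/2 := by
  set g : ℝ × ℝ → ℝ := fun p => c20*p.1^2 + c11*p.1*p.2 + c02*p.2^2 + c10*p.1 + c01*p.2 + c00
    with hgdef
  have hgc : Continuous g := by fun_prop
  have hIOn : IntegrableOn g Simp volume := hgc.continuousOn.integrableOn_compact compactSimp
  have hInd : Integrable (Simp.indicator g) volume := hIOn.integrable_indicator measSimp
  rw [← integral_indicator measSimp]
  rw [show (volume : Measure (ℝ × ℝ)) = (volume : Measure ℝ).prod volume from
      Measure.volume_eq_prod ℝ ℝ]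
  rw [Measure.volume_eq_prod ℝ ℝ] at hInd
  rw [integral_prod _ hInd]
  have hinner : ∀ x : ℝ, (∫ y, Simp.indicator g (x, y)) =
      if 0 ≤ x then ∫ y in Set.Icc 0 (1-x), g (x, y) else 0 := by
    intro x
    by_cases hx : 0 ≤ x
    · rw [if_pos hx, ← integral_indicator measurableSet_Icc]
      congr 1; funext y
      have hmem : ((x, y) ∈ Simp) ↔ y ∈ Set.Icc 0 (1-x) := by
        simp only [Simp, Set.mem_setOf_eq, Set.mem_Icc]
        constructor
        · rintro ⟨_, h2, h3⟩; exact ⟨h2, by linarith⟩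
        · rintro ⟨h2, h3⟩; exact ⟨hx, h2, by linarith⟩
      by_cases hy : y ∈ Set.Icc 0 (1-x)
      · rw [Set.indicator_of_mem (hmem.mpr hy), Set.indicator_of_mem hy]
      · rw [Set.indicator_of_notMem (fun h => hy (hmem.mp h)), Set.indicator_of_notMem hy]
    · rw [if_neg hx]
      have : (fun y => Simp.indicator g (x, y)) = fun _ => (0:ℝ) := by
        funext y
        apply Set.indicator_of_notMem
        intro h
        exact hx h.1
      rw [this, integral_zero]
  simp_rw [hinner]
  have houter : (fun x => if 0 ≤ x then ∫ y in Set.Icc 0 (1-x), g (x, y) else 0)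
      = (Set.Icc (0:ℝ) 1).indicator
        (fun x => c02*(1-x)^3/3 + (c11*x+c01)*(1-x)^2/2 + (c20*x^2+c10*x+c00)*(1-x)) := by
    funext x
    by_cases hx : 0 ≤ x
    · by_cases hx1 : x ≤ 1
      · rw [if_pos hx, Set.indicator_of_mem (Set.mem_Icc.mpr ⟨hx, hx1⟩)]
        rw [MeasureTheory.integral_Icc_eq_integral_Ioc,
            ← intervalIntegral.integral_of_le (by linarith : (0:ℝ) ≤ 1-x)]
        have : (fun y => g (x, y)) = fun y => c02*y^2 + (c11*x+c01)*y + (c20*x^2+c10*x+c00) := by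
          funext y; simp only [hgdef]; ring
        rw [this, int_quadratic_to]
      · rw [if_pos hx, Set.indicator_of_notMem (by simp [Set.mem_Icc]; intro; linarith)]
        rw [Set.Icc_eq_empty (by intro h; exact hx1 (by linarith [h]))]
        simp
    · rw [if_neg hx, Set.indicator_of_notMem (by simp [Set.mem_Icc]; intro h; exact absurd h hx)]
  rw [houter, integral_indicator measurableSet_Icc,
      MeasureTheory.integral_Icc_eq_integral_Ioc,
      ← intervalIntegral.integral_of_le (by norm_num : (0:ℝ) ≤ 1)]
  have : (fun x => c02*(1-x)^3/3 + (c11*x+c01)*(1-x)^2/2 + (c20*x^2+c10*x+c00)*(1-x))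
      = fun x : ℝ => (0:ℝ)*x^4 + (-c02/3 + c11/2 - c20)*x^3 + (c02 - c11 + c01/2 + c20 - c10)*x^2
          + (-c02 + c11/2 - c01 + c10 - c00)*x + (c02/3 + c01/2 + c00) := by
    funext x; ring
  rw [this, int_quartic]
  ring

/-- explicit linear map on ℝ² given by a 2×2 matrix -/
def lmap (m11 m12 m21 m22 : ℝ) : (ℝ × ℝ) →ₗ[ℝ] (ℝ × ℝ) where
  toFun p := (m11*p.1 + m12*p.2, m21*p.1 + m22*p.2)
  map_add' p q := by
    simp only [Prod.fst_add, Prod.snd_add, Prod.mk_add_mk, Prod.mk.injEq]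
    constructor <;> ring
  map_smul' c p := by
    simp only [Prod.smul_fst, Prod.smul_snd, Prod.smul_mk, smul_eq_mul, RingHom.id_apply,
      Prod.mk.injEq]
    constructor <;> ring

lemma lmap_det (m11 m12 m21 m22 : ℝ) :
    LinearMap.det (lmap m11 m12 m21 m22) = m11*m22 - m12*m21 := by
  rw [← LinearMap.det_toMatrix (Module.Basis.finTwoProd ℝ), Matrix.det_fin_two]
  simp [LinearMap.toMatrix_apply, lmap, Module.Basis.finTwoProd]

noncomputable def cmap (m11 m12 m21 m22 : ℝ) : (ℝ × ℝ) →L[ℝ] (ℝ × ℝ) :=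
  LinearMap.toContinuousLinearMap (lmap m11 m12 m21 m22)

lemma cmap_det (m11 m12 m21 m22 : ℝ) :
    (cmap m11 m12 m21 m22).det = m11*m22 - m12*m21 := by
  rw [ContinuousLinearMap.det, cmap]
  rw [LinearMap.coe_toContinuousLinearMap]
  exact lmap_det _ _ _ _

lemma lmap_inj (m11 m12 m21 m22 : ℝ) (hdet : m11*m22 - m12*m21 ≠ 0) :
    Function.Injective fun p : ℝ × ℝ => (m11*p.1 + m12*p.2, m21*p.1 + m22*p.2) := by
  intro p q hpq
  rw [Prod.mk.injEq] at hpq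
  obtain ⟨h1, h2⟩ := hpq
  have e1 : (m11*m22 - m12*m21) * (p.1 - q.1) = 0 := by linear_combination m22*h1 - m12*h2
  have e2 : (m11*m22 - m12*m21) * (p.2 - q.2) = 0 := by linear_combination m11*h2 - m21*h1
  rcases mul_eq_zero.mp e1 with h | h
  · exact absurd h hdet
  rcases mul_eq_zero.mp e2 with h' | h'
  · exact absurd h' hdet
  apply Prod.ext <;> linarith

/-- change of variables for an explicit affine map on the simplex -/
lemma cov_simplex (e1 e2 m11 m12 m21 m22 : ℝ) (hdet : m11*m22 - m12*m21 ≠ 0)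
    (u : ℝ × ℝ → ℝ) :
    ∫ p in (fun p : ℝ × ℝ => (e1 + m11*p.1 + m12*p.2, e2 + m21*p.1 + m22*p.2)) '' Simp, u p
      = ∫ p in Simp, |m11*m22 - m12*m21| *
          u (e1 + m11*p.1 + m12*p.2, e2 + m21*p.1 + m22*p.2) := by
  have hf : ∀ x ∈ Simp, HasFDerivWithinAt
      (fun p : ℝ × ℝ => (e1 + m11*p.1 + m12*p.2, e2 + m21*p.1 + m22*p.2))
      (cmap m11 m12 m21 m22) Simp x := by
    intro x hx
    have : (fun p : ℝ × ℝ => (e1 + m11*p.1 + m12*p.2, e2 + m21*p.1 + m22*p.2))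
        = fun p => (e1, e2) + cmap m11 m12 m21 m22 p := by
      funext p
      simp [cmap, lmap, LinearMap.coe_toContinuousLinearMap', Prod.mk_add_mk]
      constructor <;> ring
    rw [this]
    exact ((cmap m11 m12 m21 m22).hasFDerivAt.const_add _).hasFDerivWithinAt
  have hinj : Set.InjOn (fun p : ℝ × ℝ => (e1 + m11*p.1 + m12*p.2, e2 + m21*p.1 + m22*p.2))
      Simp := by
    have : Function.Injective
        (fun p : ℝ × ℝ => (e1 + m11*p.1 + m12*p.2, e2 + m21*p.1 + m22*p.2)) := by
      intro p q h
      rw [Prod.mk.injEq] at h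
      apply lmap_inj m11 m12 m21 m22 hdet
      rw [Prod.mk.injEq]
      constructor <;> [linarith [h.1]; linarith [h.2]]
    exact this.injOn
  have := MeasureTheory.integral_image_eq_integral_abs_det_fderiv_smul volume measSimp hf hinj u
  rw [this]
  congr 1
  funext p
  rw [cmap_det, smul_eq_mul]

lemma line_null (c : ℝ) : volume {p : ℝ × ℝ | p.1 + p.2 = c} = 0 := by
  have hm : MeasurableSet {p : ℝ × ℝ | p.1 + p.2 = c} :=
    measurableSet_eq_fun (measurable_fst.add measurable_snd) measurable_const
  rw [Measure.volume_eq_prod, Measure.prod_apply hm]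
  have h : ∀ x : ℝ, (Prod.mk x ⁻¹' {p : ℝ × ℝ | p.1 + p.2 = c}) = {c - x} := by
    intro x; ext y
    simp only [Set.mem_preimage, Set.mem_setOf_eq, Set.mem_singleton_iff]
    constructor <;> intro <;> linarith
  simp [h]

lemma mem_hull3 {E : Type*} [AddCommGroup E] [Module ℝ E] (v1 v2 v3 p : E) (c1 c2 c3 : ℝ)
    (h1 : 0 ≤ c1) (h2 : 0 ≤ c2) (h3 : 0 ≤ c3) (hs : c1 + c2 + c3 = 1)
    (hp : c1 • v1 + c2 • v2 + c3 • v3 = p) : p ∈ convexHull ℝ ({v1, v2, v3} : Set E) := by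
  have hv1 : v1 ∈ convexHull ℝ ({v1, v2, v3} : Set E) := subset_convexHull _ _ (by simp)
  have hv2 : v2 ∈ convexHull ℝ ({v1, v2, v3} : Set E) := subset_convexHull _ _ (by simp)
  have hv3 : v3 ∈ convexHull ℝ ({v1, v2, v3} : Set E) := subset_convexHull _ _ (by simp)
  rcases eq_or_lt_of_le (add_nonneg h2 h3) with hw | hw
  · have hc2 : c2 = 0 := by linarith
    have hc3 : c3 = 0 := by linarith
    have hc1 : c1 = 1 := by linarith
    rw [hc1, hc2, hc3] at hp
    simp at hp
    rwa [← hp]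
  · set w := c2 + c3 with hwdef
    set q := (c2/w) • v2 + (c3/w) • v3 with hq
    have hqmem : q ∈ convexHull ℝ ({v1, v2, v3} : Set E) := by
      apply (convex_convexHull ℝ _).segment_subset hv2 hv3
      exact ⟨c2/w, c3/w, div_nonneg h2 hw.le, div_nonneg h3 hw.le,
        by field_simp; exact hwdef.symm, rfl⟩
    apply (convex_convexHull ℝ _).segment_subset hv1 hqmem
    refine ⟨c1, w, h1, hw.le, by linarith, ?_⟩
    rw [hq, smul_add, smul_smul, smul_smul, mul_div_cancel₀ _ (ne_of_gt hw),
        mul_div_cancel₀ _ (ne_of_gt hw), ← add_assoc, hp]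

/-- affine functional on the plane -/
def gaff (c0 c1 c2 : ℝ) (p : ℝ × ℝ) : ℝ := c0 + c1*p.1 + c2*p.2
def g1q (α β : ℝ) : ℝ × ℝ → ℝ := gaff (2-2*β) (2-2*β) (2*α)
def g2q (α β : ℝ) : ℝ × ℝ → ℝ := gaff (2-2*α) (2*β) (2-2*α)
def g3q (α β : ℝ) : ℝ × ℝ → ℝ := gaff (2+2*β) (-2-2*β) (2*α)
def g4q (α β : ℝ) : ℝ × ℝ → ℝ := gaff (2+2*α) (2*β) (-2-2*α)
def gdq (α β : ℝ) : ℝ × ℝ → ℝ := gaff (2*α+2*β) 2 2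
/-- lower-left triangle of the quadrilateral -/
def T1q (α β : ℝ) : Set (ℝ × ℝ) :=
  {p | 0 ≤ g1q α β p ∧ 0 ≤ g2q α β p ∧ gdq α β p ≤ 0}
/-- upper-right triangle of the quadrilateral -/
def T2q (α β : ℝ) : Set (ℝ × ℝ) :=
  {p | 0 ≤ g3q α β p ∧ 0 ≤ g4q α β p ∧ 0 ≤ gdq α β p}

lemma gaff_combo (c0 c1 c2 : ℝ) (p q : ℝ × ℝ) (u v : ℝ) (huv : u + v = 1) :
    gaff c0 c1 c2 (u • p + v • q) = u * gaff c0 c1 c2 p + v * gaff c0 c1 c2 q := by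
  have hu : u = 1 - v := by linarith
  subst hu
  simp only [gaff, Prod.fst_add, Prod.snd_add, Prod.smul_fst, Prod.smul_snd, smul_eq_mul]
  ring

lemma T1_img (α β : ℝ) (hα : 0 < α) (hβ : 0 < β) (hαβ : α + β < 1) :
    T1q α β = (fun p : ℝ × ℝ =>
      (-1 - α + (2*α)*p.1 + (2:ℝ)*p.2, 1 - β + (2*β-2)*p.1 + (-2:ℝ)*p.2)) '' Simp := by
  have hk : (0:ℝ) < 4 - 4*α - 4*β := by linarith
  ext p
  constructor
  · rintro ⟨h1, h2, hd⟩
    refine ⟨((-(gdq α β p))/(4-4*α-4*β), (g1q α β p)/(4-4*α-4*β)), ⟨?_, ?_, ?_⟩, ?_⟩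
    · exact div_nonneg (by linarith) hk.le
    · exact div_nonneg h1 hk.le
    · rw [← add_div, div_le_one hk]
      have : g1q α β p + g2q α β p - gdq α β p = 4 - 4*α - 4*β := by
        simp only [g1q, g2q, gdq, gaff]; ring
      linarith
    · have hkne : (4 - 4*α - 4*β) ≠ 0 := ne_of_gt hk
      have hkne2 : (1 - α - β) ≠ 0 := ne_of_gt (by linarith)
      have hkne3 : (1 - β - α) ≠ 0 := ne_of_gt (by linarith)
      apply Prod.ext
      · simp only [g1q, gdq, gaff]
        field_simp
        ring
      · simp only [g1q, gdq, gaff]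
        field_simp
        ring
  · rintro ⟨q, ⟨hx, hy, hxy⟩, rfl⟩
    refine ⟨?_, ?_, ?_⟩
    · have : g1q α β (-1 - α + (2*α)*q.1 + (2:ℝ)*q.2, 1 - β + (2*β-2)*q.1 + (-2:ℝ)*q.2)
          = (4-4*α-4*β) * q.2 := by simp only [g1q, gaff]; ring
      rw [this]; exact mul_nonneg hk.le hy
    · have : g2q α β (-1 - α + (2*α)*q.1 + (2:ℝ)*q.2, 1 - β + (2*β-2)*q.1 + (-2:ℝ)*q.2)
          = (4-4*α-4*β) * (1 - q.1 - q.2) := by simp only [g2q, gaff]; ring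
      rw [this]; exact mul_nonneg hk.le (by linarith)
    · have : gdq α β (-1 - α + (2*α)*q.1 + (2:ℝ)*q.2, 1 - β + (2*β-2)*q.1 + (-2:ℝ)*q.2)
          = -((4-4*α-4*β) * q.1) := by simp only [gdq, gaff]; ring
      rw [this]
      simp only [neg_nonpos]
      exact mul_nonneg hk.le hx

lemma T2_img (α β : ℝ) (hα : 0 < α) (hβ : 0 < β) (hαβ : α + β < 1) :
    T2q α β = (fun p : ℝ × ℝ =>
      (-1 - α + (2:ℝ)*p.1 + (2+2*α)*p.2, 1 - β + (-2:ℝ)*p.1 + (2*β)*p.2)) '' Simp := by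
  have hk : (0:ℝ) < 4 + 4*α + 4*β := by linarith
  ext p
  constructor
  · rintro ⟨h3, h4, hd⟩
    refine ⟨((g4q α β p)/(4+4*α+4*β), (gdq α β p)/(4+4*α+4*β)), ⟨?_, ?_, ?_⟩, ?_⟩
    · exact div_nonneg h4 hk.le
    · exact div_nonneg hd hk.le
    · rw [← add_div, div_le_one hk]
      have : g3q α β p + g4q α β p + gdq α β p = 4 + 4*α + 4*β := by
        simp only [g3q, g4q, gdq, gaff]; ring
      linarith
    · have hkne : (4 + 4*α + 4*β) ≠ 0 := ne_of_gt hk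
      apply Prod.ext
      · simp only [g4q, gdq, gaff]
        field_simp
        ring
      · simp only [g4q, gdq, gaff]
        field_simp
        ring
  · rintro ⟨q, ⟨hx, hy, hxy⟩, rfl⟩
    refine ⟨?_, ?_, ?_⟩
    · have : g3q α β (-1 - α + (2:ℝ)*q.1 + (2+2*α)*q.2, 1 - β + (-2:ℝ)*q.1 + (2*β)*q.2)
          = (4+4*α+4*β) * (1 - q.1 - q.2) := by simp only [g3q, gaff]; ring
      rw [this]; exact mul_nonneg hk.le (by linarith)
    · have : g4q α β (-1 - α + (2:ℝ)*q.1 + (2+2*α)*q.2, 1 - β + (-2:ℝ)*q.1 + (2*β)*q.2)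
          = (4+4*α+4*β) * q.1 := by simp only [g4q, gaff]; ring
      rw [this]; exact mul_nonneg hk.le hx
    · have : gdq α β (-1 - α + (2:ℝ)*q.1 + (2+2*α)*q.2, 1 - β + (-2:ℝ)*q.1 + (2*β)*q.2)
          = (4+4*α+4*β) * q.2 := by simp only [gdq, gaff]; ring
      rw [this]; exact mul_nonneg hk.le hy

lemma T1_subset_quad (α β : ℝ) (hα : 0 < α) (hβ : 0 < β) (hαβ : α + β < 1) :
    T1q α β ⊆ Quad α β := by
  intro p hp
  obtain ⟨h1, h2, hd⟩ := hp
  have hk : (0:ℝ) < 4 - 4*α - 4*β := by linarith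
  have hkne := ne_of_gt hk
  have hkne2 : (1 - α - β) ≠ 0 := ne_of_gt (by linarith)
  have hmem : p ∈ convexHull ℝ ({a1 α β, a2 α β, a3 α β} : Set (ℝ × ℝ)) := by
    apply mem_hull3 _ _ _ _ ((g2q α β p)/(4-4*α-4*β)) ((-(gdq α β p))/(4-4*α-4*β))
        ((g1q α β p)/(4-4*α-4*β))
    · exact div_nonneg h2 hk.le
    · exact div_nonneg (by linarith) hk.le
    · exact div_nonneg h1 hk.le
    · rw [← add_div, ← add_div, div_eq_one_iff_eq hkne]
      simp only [g1q, g2q, gdq, gaff]; ring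
    · apply Prod.ext <;>
        simp only [a1, a2, a3, g1q, g2q, gdq, gaff, Prod.smul_mk, Prod.mk_add_mk,
          smul_eq_mul, Prod.fst_add, Prod.snd_add] <;>
        field_simp <;> ring
  refine convexHull_mono ?_ hmem
  intro x hx
  simp only [Set.mem_insert_iff, Set.mem_singleton_iff] at hx ⊢
  tauto

lemma T2_subset_quad (α β : ℝ) (hα : 0 < α) (hβ : 0 < β) (hαβ : α + β < 1) :
    T2q α β ⊆ Quad α β := by
  intro p hp
  obtain ⟨h3, h4, hd⟩ := hp
  have hk : (0:ℝ) < 4 + 4*α + 4*β := by linarith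
  have hkne := ne_of_gt hk
  have hmem : p ∈ convexHull ℝ ({a1 α β, a3 α β, a4 α β} : Set (ℝ × ℝ)) := by
    apply mem_hull3 _ _ _ _ ((g3q α β p)/(4+4*α+4*β)) ((g4q α β p)/(4+4*α+4*β))
        ((gdq α β p)/(4+4*α+4*β))
    · exact div_nonneg h3 hk.le
    · exact div_nonneg h4 hk.le
    · exact div_nonneg hd hk.le
    · rw [← add_div, ← add_div, div_eq_one_iff_eq hkne]
      simp only [g3q, g4q, gdq, gaff]; ring
    · apply Prod.ext <;>
        simp only [a1, a3, a4, g3q, g4q, gdq, gaff, Prod.smul_mk, Prod.mk_add_mk,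
          smul_eq_mul, Prod.fst_add, Prod.snd_add] <;>
        field_simp <;> ring
  refine convexHull_mono ?_ hmem
  intro x hx
  simp only [Set.mem_insert_iff, Set.mem_singleton_iff] at hx ⊢
  tauto

lemma quad_eq_union (α β : ℝ) (hα : 0 < α) (hβ : 0 < β) (hαβ : α + β < 1) :
    Quad α β = T1q α β ∪ T2q α β := by
  apply le_antisymm
  · apply convexHull_min
    · rintro x (h | h | h | h) <;> subst h
      · left
        refine ⟨?_, ?_, ?_⟩ <;> simp only [g1q, g2q, gdq, gaff, a1] <;> nlinarith
      · left
        refine ⟨?_, ?_, ?_⟩ <;> simp only [g1q, g2q, gdq, gaff, a2] <;> nlinarith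
      · left
        refine ⟨?_, ?_, ?_⟩ <;> simp only [g1q, g2q, gdq, gaff, a3] <;> nlinarith
      · right
        refine ⟨?_, ?_, ?_⟩ <;> simp only [g3q, g4q, gdq, gaff, a4] <;> nlinarith
    · -- convexity of the union
      intro p hp q hq u v hu hv huv
      have c1 : g1q α β (u • p + v • q) = u * g1q α β p + v * g1q α β q :=
        gaff_combo _ _ _ p q u v huv
      have c2 : g2q α β (u • p + v • q) = u * g2q α β p + v * g2q α β q :=
        gaff_combo _ _ _ p q u v huv
      have c3 : g3q α β (u • p + v • q) = u * g3q α β p + v * g3q α β q :=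
        gaff_combo _ _ _ p q u v huv
      have c4 : g4q α β (u • p + v • q) = u * g4q α β p + v * g4q α β q :=
        gaff_combo _ _ _ p q u v huv
      -- every point of T1 or T2 satisfies all four edge inequalities
      have key : ∀ r : ℝ × ℝ, r ∈ T1q α β ∪ T2q α β →
          0 ≤ g1q α β r ∧ 0 ≤ g2q α β r ∧ 0 ≤ g3q α β r ∧ 0 ≤ g4q α β r := by
        rintro r (⟨h1, h2, hd⟩ | ⟨h3, h4, hd⟩)
        · refine ⟨h1, h2, ?_, ?_⟩
          · have id3c : (4-4*α-4*β) * g3q α β r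
                = (4+4*α+4*β) * g2q α β r - (4-4*α+4*β) * gdq α β r := by
              simp only [g2q, g3q, gdq, gaff]; ring
            nlinarith
          · have id3d : (4-4*α-4*β) * g4q α β r
                = (4+4*α+4*β) * g1q α β r - (4+4*α-4*β) * gdq α β r := by
              simp only [g1q, g4q, gdq, gaff]; ring
            nlinarith
        · refine ⟨?_, ?_, h3, h4⟩
          · have id3a : (4+4*α+4*β) * g1q α β r
                = (4-4*α-4*β) * g4q α β r + (4+4*α-4*β) * gdq α β r := by
              simp only [g1q, g4q, gdq, gaff]; ring
            nlinarith
          · have id3b : (4+4*α+4*β) * g2q α β r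
                = (4-4*α-4*β) * g3q α β r + (4-4*α+4*β) * gdq α β r := by
              simp only [g2q, g3q, gdq, gaff]; ring
            nlinarith
      obtain ⟨p1, p2, p3, p4⟩ := key p hp
      obtain ⟨q1, q2, q3, q4⟩ := key q hq
      by_cases hz : gdq α β (u • p + v • q) ≤ 0
      · left
        refine ⟨?_, ?_, hz⟩
        · rw [c1]; exact add_nonneg (mul_nonneg hu p1) (mul_nonneg hv q1)
        · rw [c2]; exact add_nonneg (mul_nonneg hu p2) (mul_nonneg hv q2)
      · right
        refine ⟨?_, ?_, le_of_not_ge hz⟩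
        · rw [c3]; exact add_nonneg (mul_nonneg hu p3) (mul_nonneg hv q3)
        · rw [c4]; exact add_nonneg (mul_nonneg hu p4) (mul_nonneg hv q4)
  · rintro p (hp | hp)
    · exact T1_subset_quad α β hα hβ hαβ hp
    · exact T2_subset_quad α β hα hβ hαβ hp

lemma quad_integral_eq (α β : ℝ) (hα : 0 < α) (hβ : 0 < β) (hαβ : α + β < 1)
    (u : ℝ × ℝ → ℝ) (hu : Continuous u) :
    ∫ p in Quad α β, u p
      = ∫ p in Simp, ((4-4*α-4*β) *
            u (-1 - α + (2*α)*p.1 + (2:ℝ)*p.2, 1 - β + (2*β-2)*p.1 + (-2:ℝ)*p.2)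
          + (4+4*α+4*β) *
            u (-1 - α + (2:ℝ)*p.1 + (2+2*α)*p.2, 1 - β + (-2:ℝ)*p.1 + (2*β)*p.2)) := by
  have hk1 : (0:ℝ) < 4-4*α-4*β := by linarith
  have hk2 : (0:ℝ) < 4+4*α+4*β := by linarith
  have hc1 : Continuous (fun p : ℝ × ℝ =>
      (-1 - α + (2*α)*p.1 + (2:ℝ)*p.2, 1 - β + (2*β-2)*p.1 + (-2:ℝ)*p.2)) := by fun_prop
  have hc2 : Continuous (fun p : ℝ × ℝ =>
      (-1 - α + (2:ℝ)*p.1 + (2+2*α)*p.2, 1 - β + (-2:ℝ)*p.1 + (2*β)*p.2)) := by fun_prop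
  have hT1c : IsCompact (T1q α β) := by
    rw [T1_img α β hα hβ hαβ]; exact compactSimp.image hc1
  have hT2c : IsCompact (T2q α β) := by
    rw [T2_img α β hα hβ hαβ]; exact compactSimp.image hc2
  have hdisj : AEDisjoint volume (T1q α β) (T2q α β) := by
    apply measure_mono_null _ (line_null (-α-β))
    rintro p ⟨⟨_, _, hd1⟩, ⟨_, _, hd2⟩⟩
    have h0 : gdq α β p = 0 := le_antisymm hd1 hd2
    simp only [gdq, gaff] at h0
    simp only [Set.mem_setOf_eq]
    linarith
  have hi1 : IntegrableOn u (T1q α β) volume := hu.continuousOn.integrableOn_compact hT1c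
  have hi2 : IntegrableOn u (T2q α β) volume := hu.continuousOn.integrableOn_compact hT2c
  rw [quad_eq_union α β hα hβ hαβ,
      integral_union_ae hdisj hT2c.isClosed.measurableSet.nullMeasurableSet hi1 hi2,
      T1_img α β hα hβ hαβ, T2_img α β hα hβ hαβ,
      cov_simplex (-1 - α) (1 - β) (2*α) 2 (2*β-2) (-2) (by intro h; nlinarith) u,
      cov_simplex (-1 - α) (1 - β) 2 (2+2*α) (-2) (2*β) (by intro h; nlinarith) u]
  have habs1 : |(2*α)*(-2:ℝ) - 2*(2*β-2)| = 4-4*α-4*β := by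
    rw [abs_of_pos (by linarith)]; ring
  have habs2 : |(2:ℝ)*(2*β) - (2+2*α)*(-2)| = 4+4*α+4*β := by
    rw [abs_of_pos (by linarith)]; ring
  simp only [habs1, habs2]
  have hj1 : IntegrableOn (fun p : ℝ × ℝ => (4-4*α-4*β) *
      u (-1 - α + (2*α)*p.1 + (2:ℝ)*p.2, 1 - β + (2*β-2)*p.1 + (-2:ℝ)*p.2)) Simp volume :=
    ((continuous_const.mul (hu.comp hc1)).continuousOn).integrableOn_compact compactSimp
  have hj2 : IntegrableOn (fun p : ℝ × ℝ => (4+4*α+4*β) *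
      u (-1 - α + (2:ℝ)*p.1 + (2+2*α)*p.2, 1 - β + (-2:ℝ)*p.1 + (2*β)*p.2)) Simp volume :=
    ((continuous_const.mul (hu.comp hc2)).continuousOn).integrableOn_compact compactSimp
  rw [← integral_add hj1 hj2]

set_option maxHeartbeats 2000000 in
lemma quad_phi1_zero (α β : ℝ) (hα : 0 < α) (hβ : 0 < β) (hαβ : α + β < 1) :
    ∫ p in Quad α β, phi1 α β p = 0 := by
  have hD : (α^2+β^2+3) ≠ 0 := by positivity
  have hu : Continuous (phi1 α β) := by
    unfold phi1 phi0
    fun_prop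
  rw [quad_integral_eq α β hα hβ hαβ _ hu]
  have h : (fun p : ℝ × ℝ => (4-4*α-4*β) *
        phi1 α β (-1 - α + (2*α)*p.1 + (2:ℝ)*p.2, 1 - β + (2*β-2)*p.1 + (-2:ℝ)*p.2)
      + (4+4*α+4*β) *
        phi1 α β (-1 - α + (2:ℝ)*p.1 + (2+2*α)*p.2, 1 - β + (-2:ℝ)*p.1 + (2*β)*p.2))
      = fun p : ℝ × ℝ =>
        ((432 + 288*β^2 + (-288)*β^3 + 144*β^4 + 432*α + (-144)*α*β + (-144)*α*β^2 + 144*α*β^3 + 144*α^2 + (-288)*α^2*β + (-144)*α^2*β^2 + (-432)*α^3 + (-144)*α^3*β)/(12*(α^2+β^2+3)))*p.1^2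
        + ((864 + 288*β + 864*β^2 + 288*β^3 + 2592*α + (-576)*α*β + 864*α*β^2 + (-288)*α^2 + 864*α^2*β + 288*α^3)/(12*(α^2+β^2+3)))*p.1*p.2
        + ((864 + (-432)*β + 432*β^2 + (-144)*β^3 + (-144)*β^4 + 864*α + 720*α*β + 144*α*β^3 + 1152*α^2 + 144*α^2*β + 144*α^2*β^2 + 576*α^3 + (-144)*α^3*β)/(12*(α^2+β^2+3)))*p.2^2
        + (((-576) + (-144)*β + (-432)*β^2 + 144*β^3 + (-144)*β^4 + (-1296)*α + 336*α*β + (-240)*α*β^3 + 48*α*β^4 + (-48)*α^2 + 288*α^2*β + 48*α^2*β^3 + 336*α^3 + 144*α^3*β + (-48)*α^3*β^2 + 48*α^4 + (-48)*α^4*β)/(12*(α^2+β^2+3)))*p.1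
        + (((-1152) + 432*β + (-720)*β^2 + 144*β^3 + 144*β^4 + (-1296)*α + (-624)*α*β + (-288)*α*β^2 + (-48)*α*β^3 + (-48)*α*β^4 + (-1104)*α^2 + (-576)*α^2*β + (-48)*α^2*β^3 + (-624)*α^3 + 144*α^3*β + 48*α^3*β^2 + (-48)*α^4 + 48*α^4*β)/(12*(α^2+β^2+3)))*p.2
        + ((288 + (-48)*β + 192*β^2 + (-48)*β^3 + 432*α + 48*α*β + 48*α*β^2 + 48*α*β^3 + 192*α^2 + 48*α^2*β + 48*α^3 + (-48)*α^3*β)/(12*(α^2+β^2+3))) := by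
    funext p
    simp only [phi1, phi0]
    field_simp
    ring
  rw [h, simplex_integral]
  field_simp
  ring

set_option maxHeartbeats 2000000 in
lemma quad_phi3_zero (α β : ℝ) (hα : 0 < α) (hβ : 0 < β) (hαβ : α + β < 1) :
    ∫ p in Quad α β, phi3 α β p = 0 := by
  have hD : (α^2+β^2+3) ≠ 0 := by positivity
  have hu : Continuous (phi3 α β) := by
    unfold phi3 phi0
    fun_prop
  rw [quad_integral_eq α β hα hβ hαβ _ hu]
  have h : (fun p : ℝ × ℝ => (4-4*α-4*β) *
        phi3 α β (-1 - α + (2*α)*p.1 + (2:ℝ)*p.2, 1 - β + (2*β-2)*p.1 + (-2:ℝ)*p.2)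
      + (4+4*α+4*β) *
        phi3 α β (-1 - α + (2:ℝ)*p.1 + (2+2*α)*p.2, 1 - β + (-2:ℝ)*p.1 + (2*β)*p.2))
      = fun p : ℝ × ℝ =>
        ((432 + 864*β + 576*β^3 + (-144)*β^4 + 432*α + 144*α*β + 432*α*β^2 + (-144)*α*β^3 + 144*α^2 + (-432)*α^2*β^2 + (-432)*α^3 + (-432)*α^3*β)/(12*(α^2+β^2+3)))*p.1^2
        + ((864 + 1440*β + (-288)*β^2 + 288*β^3 + 2592*α + 576*α*β + 864*α*β^2 + (-288)*α^2 + 864*α^2*β + 288*α^3)/(12*(α^2+β^2+3)))*p.1*p.2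
        + ((864 + 432*β + 144*β^2 + 144*β^3 + 144*β^4 + 864*α + 1008*α*β + 576*α*β^2 + 432*α*β^3 + 1152*α^2 + 1008*α^2*β + 432*α^2*β^2 + 576*α^3 + 144*α^3*β)/(12*(α^2+β^2+3)))*p.2^2
        + (((-288) + (-720)*β + 144*β^2 + (-432)*β^3 + 144*β^4 + (-720)*α + (-624)*α*β + (-384)*α*β^2 + 144*α*β^3 + 48*α*β^4 + (-240)*α^2 + 96*α^2*β + 384*α^2*β^2 + 48*α^2*β^3 + 528*α^3 + 336*α^3*β + (-48)*α^3*β^2 + (-48)*α^4 + (-48)*α^4*β)/(12*(α^2+β^2+3)))*p.1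
        + (((-576) + (-432)*β + 144*β^2 + (-144)*β^3 + (-144)*β^4 + (-1008)*α + (-816)*α*β + (-768)*α*β^2 + (-432)*α*β^3 + (-48)*α*β^4 + (-624)*α^2 + (-1248)*α^2*β + (-384)*α^2*β^2 + (-48)*α^2*β^3 + (-528)*α^3 + (-48)*α^3*β + 48*α^3*β^2 + 48*α^4 + 48*α^4*β)/(12*(α^2+β^2+3)))*p.2
        + ((48*β + (-96)*β^2 + 48*β^3 + 144*α + 240*α*β + 144*α*β^2 + 48*α*β^3 + 96*α^2 + 144*α^2*β + (-48)*α^3 + (-48)*α^3*β)/(12*(α^2+β^2+3))) := by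
    funext p
    simp only [phi3, phi0]
    field_simp
    ring
  rw [h, simplex_integral]
  field_simp
  ring
set_option maxHeartbeats 2000000 in
/-- φ₁ and φ₃ are dual to the edge-average degrees of freedom on e₁ and e₃:
dᵢ(φ₁) = δ_{i1} and dᵢ(φ₃) = δ_{i3} for i = 0, …, 4. -/
theorem phi1_phi3_dual (α β : ℝ) (hα : 0 < α) (hβ : 0 < β) (hαβ : α + β < 1) :
    quadAvg α β (phi1 α β) = 0 ∧
    edgeAvg (a1 α β) (a2 α β) (phi1 α β) = 1 ∧
    edgeAvg (a2 α β) (a3 α β) (phi1 α β) = 0 ∧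
    edgeAvg (a3 α β) (a4 α β) (phi1 α β) = 0 ∧
    edgeAvg (a4 α β) (a1 α β) (phi1 α β) = 0 ∧
    quadAvg α β (phi3 α β) = 0 ∧
    edgeAvg (a1 α β) (a2 α β) (phi3 α β) = 0 ∧
    edgeAvg (a2 α β) (a3 α β) (phi3 α β) = 0 ∧
    edgeAvg (a3 α β) (a4 α β) (phi3 α β) = 1 ∧
    edgeAvg (a4 α β) (a1 α β) (phi3 α β) = 0 := by
  have hD : (α^2+β^2+3) ≠ 0 := by positivity
  have hedge_phi1_1 : edgeAvg (a1 α β) (a2 α β) (phi1 α β) = 1 := by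
    have h : (fun t : ℝ => phi1 α β ((1-t) • a1 α β + t • a2 α β))
        = fun t => (((-36)*β + 72*β^2 + (-36)*β^3 + 72*α^2 + 36*α^2*β)/(12*(α^2+β^2+3)))*t^2
            + ((36*β + (-72)*β^2 + 36*β^3 + (-108)*α + (-12)*α*β + (-12)*α*β^2 + (-12)*α*β^3 + (-72)*α^2 + (-36)*α^2*β + (-12)*α^3 + 12*α^3*β)/(12*(α^2+β^2+3)))*t
            + ((36 + (-6)*β + 24*β^2 + (-6)*β^3 + 54*α + 6*α*β + 6*α*β^2 + 6*α*β^3 + 24*α^2 + 6*α^2*β + 6*α^3 + (-6)*α^3*β)/(12*(α^2+β^2+3))) := by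
      funext t
      simp only [a1, a2, phi1, phi0, Prod.smul_mk, Prod.mk_add_mk, smul_eq_mul]
      field_simp
      ring
    rw [edgeAvg, h, int_quadratic]
    field_simp
    ring
  have hedge_phi1_2 : edgeAvg (a2 α β) (a3 α β) (phi1 α β) = 0 := by
    have h : (fun t : ℝ => phi1 α β ((1-t) • a2 α β + t • a3 α β))
        = fun t => ((108 + (-36)*β + 36*β^2 + (-36)*β^3 + (-216)*α + 72*α*β + (-72)*α*β^2 + 108*α^2 + (-36)*α^2*β)/(12*(α^2+β^2+3)))*t^2
            + (((-144) + 36*β + (-72)*β^2 + 36*β^3 + 252*α + (-36)*α*β + 60*α*β^2 + 12*α*β^3 + (-120)*α^2 + 12*α^2*β + 12*α^3 + (-12)*α^3*β)/(12*(α^2+β^2+3)))*t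
            + ((36 + (-6)*β + 24*β^2 + (-6)*β^3 + (-54)*α + (-6)*α*β + (-6)*α*β^2 + (-6)*α*β^3 + 24*α^2 + 6*α^2*β + (-6)*α^3 + 6*α^3*β)/(12*(α^2+β^2+3))) := by
      funext t
      simp only [a2, a3, phi1, phi0, Prod.smul_mk, Prod.mk_add_mk, smul_eq_mul]
      field_simp
      ring
    rw [edgeAvg, h, int_quadratic]
    field_simp
    ring
  have hedge_phi1_3 : edgeAvg (a3 α β) (a4 α β) (phi1 α β) = 0 := by
    have h : (fun t : ℝ => phi1 α β ((1-t) • a3 α β + t • a4 α β))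
        = fun t => (((-36)*β + (-72)*β^2 + (-36)*β^3 + 72*α^2 + (-108)*α^2*β)/(12*(α^2+β^2+3)))*t^2
            + ((36*β + 72*β^2 + 36*β^3 + 36*α + (-60)*α*β + 36*α*β^2 + (-12)*α*β^3 + (-72)*α^2 + 108*α^2*β + (-12)*α^3 + 12*α^3*β)/(12*(α^2+β^2+3)))*t
            + (((-6)*β + (-12)*β^2 + (-6)*β^3 + (-18)*α + 30*α*β + (-18)*α*β^2 + 6*α*β^3 + 12*α^2 + (-18)*α^2*β + 6*α^3 + (-6)*α^3*β)/(12*(α^2+β^2+3))) := by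
      funext t
      simp only [a3, a4, phi1, phi0, Prod.smul_mk, Prod.mk_add_mk, smul_eq_mul]
      field_simp
      ring
    rw [edgeAvg, h, int_quadratic]
    field_simp
    ring
  have hedge_phi1_4 : edgeAvg (a4 α β) (a1 α β) (phi1 α β) = 0 := by
    have h : (fun t : ℝ => phi1 α β ((1-t) • a4 α β + t • a1 α β))
        = fun t => ((108 + (-36)*β + 36*β^2 + (-36)*β^3 + 216*α + (-72)*α*β + 72*α*β^2 + 108*α^2 + (-36)*α^2*β)/(12*(α^2+β^2+3)))*t^2
            + (((-72) + 36*β + 36*β^3 + (-180)*α + 108*α*β + (-84)*α*β^2 + 12*α*β^3 + (-96)*α^2 + 60*α^2*β + 12*α^3 + (-12)*α^3*β)/(12*(α^2+β^2+3)))*t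
            + (((-6)*β + (-12)*β^2 + (-6)*β^3 + 18*α + (-30)*α*β + 18*α*β^2 + (-6)*α*β^3 + 12*α^2 + (-18)*α^2*β + (-6)*α^3 + 6*α^3*β)/(12*(α^2+β^2+3))) := by
      funext t
      simp only [a4, a1, phi1, phi0, Prod.smul_mk, Prod.mk_add_mk, smul_eq_mul]
      field_simp
      ring
    rw [edgeAvg, h, int_quadratic]
    field_simp
    ring
  have hedge_phi3_1 : edgeAvg (a1 α β) (a2 α β) (phi3 α β) = 0 := by
    have h : (fun t : ℝ => phi3 α β ((1-t) • a1 α β + t • a2 α β))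
        = fun t => ((36*β + (-72)*β^2 + 36*β^3 + 72*α^2 + 108*α^2*β)/(12*(α^2+β^2+3)))*t^2
            + (((-36)*β + 72*β^2 + (-36)*β^3 + (-36)*α + (-60)*α*β + (-36)*α*β^2 + (-12)*α*β^3 + (-72)*α^2 + (-108)*α^2*β + 12*α^3 + 12*α^3*β)/(12*(α^2+β^2+3)))*t
            + ((6*β + (-12)*β^2 + 6*β^3 + 18*α + 30*α*β + 18*α*β^2 + 6*α*β^3 + 12*α^2 + 18*α^2*β + (-6)*α^3 + (-6)*α^3*β)/(12*(α^2+β^2+3))) := by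
      funext t
      simp only [a1, a2, phi3, phi0, Prod.smul_mk, Prod.mk_add_mk, smul_eq_mul]
      field_simp
      ring
    rw [edgeAvg, h, int_quadratic]
    field_simp
    ring
  have hedge_phi3_2 : edgeAvg (a2 α β) (a3 α β) (phi3 α β) = 0 := by
    have h : (fun t : ℝ => phi3 α β ((1-t) • a2 α β + t • a3 α β))
        = fun t => ((108 + 36*β + 36*β^2 + 36*β^3 + (-216)*α + (-72)*α*β + (-72)*α*β^2 + 108*α^2 + 36*α^2*β)/(12*(α^2+β^2+3)))*t^2
            + (((-72) + (-36)*β + (-36)*β^3 + 180*α + 108*α*β + 84*α*β^2 + 12*α*β^3 + (-96)*α^2 + (-60)*α^2*β + (-12)*α^3 + (-12)*α^3*β)/(12*(α^2+β^2+3)))*t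
            + ((6*β + (-12)*β^2 + 6*β^3 + (-18)*α + (-30)*α*β + (-18)*α*β^2 + (-6)*α*β^3 + 12*α^2 + 18*α^2*β + 6*α^3 + 6*α^3*β)/(12*(α^2+β^2+3))) := by
      funext t
      simp only [a2, a3, phi3, phi0, Prod.smul_mk, Prod.mk_add_mk, smul_eq_mul]
      field_simp
      ring
    rw [edgeAvg, h, int_quadratic]
    field_simp
    ring
  have hedge_phi3_3 : edgeAvg (a3 α β) (a4 α β) (phi3 α β) = 1 := by
    have h : (fun t : ℝ => phi3 α β ((1-t) • a3 α β + t • a4 α β))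
        = fun t => ((36*β + 72*β^2 + 36*β^3 + 72*α^2 + (-36)*α^2*β)/(12*(α^2+β^2+3)))*t^2
            + (((-36)*β + (-72)*β^2 + (-36)*β^3 + 108*α + (-12)*α*β + 12*α*β^2 + (-12)*α*β^3 + (-72)*α^2 + 36*α^2*β + 12*α^3 + 12*α^3*β)/(12*(α^2+β^2+3)))*t
            + ((36 + 6*β + 24*β^2 + 6*β^3 + (-54)*α + 6*α*β + (-6)*α*β^2 + 6*α*β^3 + 24*α^2 + (-6)*α^2*β + (-6)*α^3 + (-6)*α^3*β)/(12*(α^2+β^2+3))) := by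
      funext t
      simp only [a3, a4, phi3, phi0, Prod.smul_mk, Prod.mk_add_mk, smul_eq_mul]
      field_simp
      ring
    rw [edgeAvg, h, int_quadratic]
    field_simp
    ring
  have hedge_phi3_4 : edgeAvg (a4 α β) (a1 α β) (phi3 α β) = 0 := by
    have h : (fun t : ℝ => phi3 α β ((1-t) • a4 α β + t • a1 α β))
        = fun t => ((108 + 36*β + 36*β^2 + 36*β^3 + 216*α + 72*α*β + 72*α*β^2 + 108*α^2 + 36*α^2*β)/(12*(α^2+β^2+3)))*t^2
            + (((-144) + (-36)*β + (-72)*β^2 + (-36)*β^3 + (-252)*α + (-36)*α*β + (-60)*α*β^2 + 12*α*β^3 + (-120)*α^2 + (-12)*α^2*β + (-12)*α^3 + (-12)*α^3*β)/(12*(α^2+β^2+3)))*t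
            + ((36 + 6*β + 24*β^2 + 6*β^3 + 54*α + (-6)*α*β + 6*α*β^2 + (-6)*α*β^3 + 24*α^2 + (-6)*α^2*β + 6*α^3 + 6*α^3*β)/(12*(α^2+β^2+3))) := by
      funext t
      simp only [a4, a1, phi3, phi0, Prod.smul_mk, Prod.mk_add_mk, smul_eq_mul]
      field_simp
      ring
    rw [edgeAvg, h, int_quadratic]
    field_simp
    ring
  have hq1 : quadAvg α β (phi1 α β) = 0 := by
    rw [quadAvg, quad_phi1_zero α β hα hβ hαβ, zero_div]
  have hq3 : quadAvg α β (phi3 α β) = 0 := by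
    rw [quadAvg, quad_phi3_zero α β hα hβ hαβ, zero_div]
  exact ⟨hq1, hedge_phi1_1, hedge_phi1_2, hedge_phi1_3, hedge_phi1_4,
    hq3, hedge_phi3_1, hedge_phi3_2, hedge_phi3_3, hedge_phi3_4⟩
end
end

section
/- Reproduction property of the QLTZ nodal interpolation: for every v in V := span_ℝ{1, ξ, η, ξ², η²}, one has v = (⨍_Q v)·φ₀ + Σ_{i=1}^{4} (⨍_{eᵢ} v)·φᵢ as functions on ℝ²; in particular the interpolation operator Π_Q w := (⨍_Q w)·φ₀ + Σ_{i=1}^{4} (⨍_{eᵢ} w)·φᵢ satisfies Π_Q v = v whenever v ∈ V. -/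
open MeasureTheory

noncomputable section

/-- The QLTZ shape function space V = span_ℝ{1, ξ, η, ξ², η²}, with ξ(p) = p.2, η(p) = p.1. -/
def QLTZspace : Submodule ℝ (ℝ × ℝ → ℝ) :=
  Submodule.span ℝ
    ({fun _ => 1, fun p => p.2, fun p => p.1, fun p => p.2 ^ 2, fun p => p.1 ^ 2} :
      Set (ℝ × ℝ → ℝ))

namespace QLTZaux

/- ### Elementary polynomial integrals -/

lemma intpoly3 (d0 d1 d2 d3 : ℝ) :
    (∫ t in (-1:ℝ)..1, (d0 + d1*t + d2*t^2 + d3*t^3)) = 2*d0 + 2/3*d2 := by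
  have h : ∀ t ∈ Set.uIcc (-1:ℝ) 1, HasDerivAt
      (fun t : ℝ => d0*t + d1*t^2/2 + d2*t^3/3 + d3*t^4/4)
      (d0 + d1*t + d2*t^2 + d3*t^3) t := by
    intro t _
    have h2 : HasDerivAt (fun t : ℝ => t^2) (2*t) t := by simpa using hasDerivAt_pow 2 t
    have h3 : HasDerivAt (fun t : ℝ => t^3) (3*t^2) t := by simpa using hasDerivAt_pow 3 t
    have h4 : HasDerivAt (fun t : ℝ => t^4) (4*t^3) t := by simpa using hasDerivAt_pow 4 t
    exact ((((hasDerivAt_id t).const_mul d0).add ((h2.const_mul d1).div_const 2)).add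
      ((h3.const_mul d2).div_const 3)).add ((h4.const_mul d3).div_const 4) |>.congr_deriv
      (by ring)
  rw [intervalIntegral.integral_eq_sub_of_hasDerivAt h
    (Continuous.intervalIntegrable (by continuity) _ _)]
  ring

lemma intpoly01 (d0 d1 d2 : ℝ) :
    (∫ t in (0:ℝ)..1, (d0 + d1*t + d2*t^2)) = d0 + d1/2 + d2/3 := by
  have h : ∀ t ∈ Set.uIcc (0:ℝ) 1, HasDerivAt
      (fun t : ℝ => d0*t + d1*t^2/2 + d2*t^3/3) (d0 + d1*t + d2*t^2) t := by
    intro t _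
    have h2 : HasDerivAt (fun t : ℝ => t^2) (2*t) t := by simpa using hasDerivAt_pow 2 t
    have h3 : HasDerivAt (fun t : ℝ => t^3) (3*t^2) t := by simpa using hasDerivAt_pow 3 t
    exact (((hasDerivAt_id t).const_mul d0).add ((h2.const_mul d1).div_const 2)).add
      ((h3.const_mul d2).div_const 3) |>.congr_deriv
      (by ring)
  rw [intervalIntegral.integral_eq_sub_of_hasDerivAt h
    (Continuous.intervalIntegrable (by continuity) _ _)]
  ring

/- ### Edge averages of quadratics -/

lemma edgeAvg_poly (P R : ℝ × ℝ) (c0 c1 c2 c3 c4 : ℝ) :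
    edgeAvg P R (fun p => c0 + c1*p.2 + c2*p.1 + c3*p.2^2 + c4*p.1^2) =
      c0 + c1*(P.2+R.2)/2 + c2*(P.1+R.1)/2 + c3*(P.2^2+P.2*R.2+R.2^2)/3
        + c4*(P.1^2+P.1*R.1+R.1^2)/3 := by
  rw [edgeAvg]
  rw [show (fun t : ℝ => (fun p : ℝ × ℝ => c0 + c1*p.2 + c2*p.1 + c3*p.2^2 + c4*p.1^2)
      ((1 - t) • P + t • R)) = fun t : ℝ =>
        ((c0 + c1*P.2 + c2*P.1 + c3*P.2^2 + c4*P.1^2)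
          + (c1*(R.2-P.2) + c2*(R.1-P.1) + 2*c3*P.2*(R.2-P.2) + 2*c4*P.1*(R.1-P.1))*t
          + (c3*(R.2-P.2)^2 + c4*(R.1-P.1)^2)*t^2) from funext fun t => by
        simp [Prod.smul_def, smul_eq_mul]; ring]
  rw [intpoly01]
  ring

/- ### The bilinear parametrization of the quadrilateral -/

def Tmap (α β : ℝ) (p : ℝ × ℝ) : ℝ × ℝ := (p.1 + α*(p.1*p.2), p.2 + β*(p.1*p.2))

def Sq : Set (ℝ × ℝ) := Set.Icc (-1:ℝ) 1 ×ˢ Set.Icc (-1:ℝ) 1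

def Bmap (α β : ℝ) (p : ℝ × ℝ) : ℝ × ℝ →L[ℝ] ℝ × ℝ :=
  LinearMap.toContinuousLinearMap (Matrix.toLin (Module.Basis.finTwoProd ℝ) (Module.Basis.finTwoProd ℝ)
    !![1 + α*p.2, α*p.1; β*p.2, 1 + β*p.1])

lemma continuous_Tmap (α β : ℝ) : Continuous (Tmap α β) := by
  unfold Tmap; fun_prop

lemma hasFDerivAt_Tmap (α β : ℝ) (p : ℝ × ℝ) :
    HasFDerivAt (Tmap α β) (Bmap α β p) p := by
  rw [Bmap, Matrix.toLin_finTwoProd_toContinuousLinearMap]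
  have h1 : HasFDerivAt (fun q : ℝ × ℝ => q.1 + α*(q.1*q.2))
      ((1 + α*p.2) • ContinuousLinearMap.fst ℝ ℝ ℝ + (α*p.1) • ContinuousLinearMap.snd ℝ ℝ ℝ)
      p := by
    have := (hasFDerivAt_fst (𝕜 := ℝ) (p := p)).add
      (((hasFDerivAt_fst (𝕜 := ℝ) (p := p)).mul (hasFDerivAt_snd (𝕜 := ℝ) (p := p))).const_mul α)
    exact this.congr_fderiv (by ext <;> simp)
  have h2 : HasFDerivAt (fun q : ℝ × ℝ => q.2 + β*(q.1*q.2))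
      ((β*p.2) • ContinuousLinearMap.fst ℝ ℝ ℝ + (1 + β*p.1) • ContinuousLinearMap.snd ℝ ℝ ℝ)
      p := by
    have := (hasFDerivAt_snd (𝕜 := ℝ) (p := p)).add
      (((hasFDerivAt_fst (𝕜 := ℝ) (p := p)).mul (hasFDerivAt_snd (𝕜 := ℝ) (p := p))).const_mul β)
    exact this.congr_fderiv (by ext <;> simp)
  exact h1.prodMk h2

lemma det_Bmap (α β : ℝ) (p : ℝ × ℝ) :
    (Bmap α β p).det = 1 + α*p.2 + β*p.1 := by
  simp only [Bmap, LinearMap.det_toContinuousLinearMap, LinearMap.det_toLin,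
    Matrix.det_fin_two_of]
  ring

lemma injOn_Tmap {α β : ℝ} (hα : 0 < α) (hβ : 0 < β) (hαβ : α + β < 1) :
    Set.InjOn (Tmap α β) Sq := by
  rintro ⟨x, y⟩ hp ⟨x', y'⟩ hq h
  simp only [Sq, Set.mem_prod, Set.mem_Icc] at hp hq
  rw [Tmap, Tmap, Prod.mk.injEq] at h
  obtain ⟨h1, h2⟩ := h
  have hk : (x'*y' - x*y) * (2 + β*(x+x') + α*(y+y')) = 0 := by nlinarith [h1, h2]
  have hpos : 0 < 2 + β*(x+x') + α*(y+y') := by nlinarith [hp.1.1, hp.1.2, hp.2.1, hp.2.2,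
    hq.1.1, hq.1.2, hq.2.1, hq.2.2]
  have hk0 : x'*y' - x*y = 0 := by
    rcases mul_eq_zero.1 hk with h | h
    · exact h
    · linarith
  have : x = x' := by nlinarith [h1, hk0]
  have : y = y' := by nlinarith [h2, hk0]
  simp_all

/- ### The quadrilateral is the image of the square -/

def Hset (α β : ℝ) : Set (ℝ × ℝ) :=
  {p | 0 ≤ (1-β)*(1+p.1) + α*p.2 ∧ 0 ≤ (1-α)*(1+p.2) + β*p.1 ∧
       0 ≤ (1+β)*(1-p.1) + α*p.2 ∧ 0 ≤ (1+α)*(1-p.2) + β*p.1}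

lemma image_subset_quad {α β : ℝ} (hα : 0 < α) (hβ : 0 < β) (hαβ : α + β < 1) :
    Tmap α β '' Sq ⊆ Quad α β := by
  rintro _ ⟨⟨x, y⟩, hp, rfl⟩
  simp only [Sq, Set.mem_prod, Set.mem_Icc] at hp
  obtain ⟨⟨hx1, hx2⟩, hy1, hy2⟩ := hp
  set w : Fin 4 → ℝ := ![(1-x)*(1+y)/4, (1-x)*(1-y)/4, (1+x)*(1-y)/4, (1+x)*(1+y)/4] with hw
  set z : Fin 4 → ℝ × ℝ := ![a1 α β, a2 α β, a3 α β, a4 α β] with hz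
  have hw0 : ∀ i ∈ Finset.univ, 0 ≤ w i := by
    intro i _
    fin_cases i <;> simp [hw] <;> nlinarith
  have hws : ∑ i, w i = 1 := by
    simp [hw, Fin.sum_univ_four]; ring
  have hzs : ∀ i ∈ Finset.univ, z i ∈ ({a1 α β, a2 α β, a3 α β, a4 α β} : Set (ℝ × ℝ)) := by
    intro i _; fin_cases i <;> simp [hz]
  have hmem := Finset.centerMass_mem_convexHull Finset.univ hw0 (by rw [hws]; norm_num) hzs
  rw [Finset.centerMass_eq_of_sum_1 _ _ hws] at hmem
  convert hmem using 1
  · rfl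
  simp only [hz, hw, Fin.sum_univ_four, Matrix.cons_val_zero, Matrix.cons_val_one,
    Matrix.head_cons, a1, a2, a3, a4, Prod.smul_mk, smul_eq_mul, Prod.mk_add_mk, Tmap,
    Matrix.cons_val_two, Matrix.tail_cons, Matrix.cons_val_three]
  rw [Prod.mk.injEq]
  constructor <;> ring

lemma quad_subset_Hset {α β : ℝ} (hα : 0 < α) (hβ : 0 < β) (hαβ : α + β < 1) :
    Quad α β ⊆ Hset α β := by
  apply convexHull_min
  · rintro p (rfl | rfl | rfl | rfl) <;>
      (refine ⟨?_, ?_, ?_, ?_⟩ <;> simp [a1, a2, a3, a4, Hset] <;> nlinarith)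
  · rintro p hp q hq s t hs ht hst
    simp only [Hset, Set.mem_setOf_eq] at hp hq ⊢
    simp only [Prod.fst_add, Prod.snd_add, Prod.smul_fst, Prod.smul_snd, smul_eq_mul]
    obtain ⟨hp1, hp2, hp3, hp4⟩ := hp
    obtain ⟨hq1, hq2, hq3, hq4⟩ := hq
    refine ⟨?_, ?_, ?_, ?_⟩ <;> nlinarith [mul_nonneg hs hp1, mul_nonneg ht hq1,
      mul_nonneg hs hp2, mul_nonneg ht hq2, mul_nonneg hs hp3, mul_nonneg ht hq3,
      mul_nonneg hs hp4, mul_nonneg ht hq4]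

lemma Hset_subset_image {α β : ℝ} (hα : 0 < α) (hβ : 0 < β) (hαβ : α + β < 1) :
    Hset α β ⊆ Tmap α β '' Sq := by
  rintro ⟨u, v⟩ ⟨hL1, hL2, hL3, hL4⟩
  simp only at hL1 hL2 hL3 hL4
  have hΔ : 0 ≤ (1+β*u+α*v)^2 - 4*(α*β)*(u*v) := by
    nlinarith [sq_nonneg (1 - 2*β - β*u + α*v), mul_nonneg hβ.le hL1]
  set r : ℝ := Real.sqrt ((1+β*u+α*v)^2 - 4*(α*β)*(u*v)) with hrdef
  have hr0 : 0 ≤ r := Real.sqrt_nonneg _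
  have hr2 : r^2 = (1+β*u+α*v)^2 - 4*(α*β)*(u*v) := Real.sq_sqrt hΔ
  have hrA : r ≤ 1 + 2*β - β*u + α*v := by
    have hA : 0 ≤ 1 + 2*β - β*u + α*v := by linarith
    have hA2 : (1+β*u+α*v)^2 - 4*(α*β)*(u*v) ≤ (1 + 2*β - β*u + α*v)^2 := by
      nlinarith [mul_nonneg hβ.le hL3]
    calc r ≤ Real.sqrt ((1 + 2*β - β*u + α*v)^2) := Real.sqrt_le_sqrt hA2
    _ = 1 + 2*β - β*u + α*v := Real.sqrt_sq hA
  have hrB : 1 - 2*β - β*u + α*v ≤ r := by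
    rcases le_or_gt (1 - 2*β - β*u + α*v) 0 with h | h
    · linarith
    · rw [hrdef, Real.le_sqrt h.le hΔ]
      nlinarith [mul_nonneg hβ.le hL1]
  have hrA' : r ≤ 1 + 2*α + β*u - α*v := by
    have hA : 0 ≤ 1 + 2*α + β*u - α*v := by linarith
    have hA2 : (1+β*u+α*v)^2 - 4*(α*β)*(u*v) ≤ (1 + 2*α + β*u - α*v)^2 := by
      nlinarith [mul_nonneg hα.le hL4]
    calc r ≤ Real.sqrt ((1 + 2*α + β*u - α*v)^2) := Real.sqrt_le_sqrt hA2
    _ = 1 + 2*α + β*u - α*v := Real.sqrt_sq hA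
  have hrB' : 1 - 2*α + β*u - α*v ≤ r := by
    rcases le_or_gt (1 - 2*α + β*u - α*v) 0 with h | h
    · linarith
    · rw [hrdef, Real.le_sqrt h.le hΔ]
      nlinarith [mul_nonneg hα.le hL2]
  have hkey : ((1+β*u+α*v) - r)^2 - 2*(1+β*u+α*v)*((1+β*u+α*v) - r) + 4*(α*β)*(u*v) = 0 := by
    linear_combination hr2
  refine ⟨(u - ((1+β*u+α*v) - r)/(2*β), v - ((1+β*u+α*v) - r)/(2*α)), ⟨?_, ?_⟩, ?_⟩
  · rw [Set.mem_Icc]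
    constructor
    · have h1 : ((1+β*u+α*v) - r)/(2*β) ≤ u + 1 := by
        rw [div_le_iff₀ (by positivity)]
        nlinarith [hrB]
      linarith
    · have h1 : u - 1 ≤ ((1+β*u+α*v) - r)/(2*β) := by
        rw [le_div_iff₀ (by positivity)]
        nlinarith [hrA]
      linarith
  · rw [Set.mem_Icc]
    constructor
    · have h1 : ((1+β*u+α*v) - r)/(2*α) ≤ v + 1 := by
        rw [div_le_iff₀ (by positivity)]
        nlinarith [hrB']
      linarith
    · have h1 : v - 1 ≤ ((1+β*u+α*v) - r)/(2*α) := by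
        rw [le_div_iff₀ (by positivity)]
        nlinarith [hrA']
      linarith
  · rw [Tmap, Prod.mk.injEq]
    have hβ0 : (2:ℝ)*β ≠ 0 := by positivity
    have hα0 : (2:ℝ)*α ≠ 0 := by positivity
    constructor
    · field_simp
      ring_nf
      linear_combination hkey
    · field_simp
      ring_nf
      linear_combination hkey

lemma image_eq {α β : ℝ} (hα : 0 < α) (hβ : 0 < β) (hαβ : α + β < 1) :
    Tmap α β '' Sq = Quad α β :=
  subset_antisymm (image_subset_quad hα hβ hαβ)
    ((quad_subset_Hset hα hβ hαβ).trans (Hset_subset_image hα hβ hαβ))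

/- ### Change of variables -/

lemma measurableSet_Sq : MeasurableSet Sq :=
  (measurableSet_Icc).prod measurableSet_Icc

lemma integral_quad {α β : ℝ} (hα : 0 < α) (hβ : 0 < β) (hαβ : α + β < 1)
    (f : ℝ × ℝ → ℝ) (hf : Continuous f) :
    ∫ p in Quad α β, f p
      = ∫ x in (-1:ℝ)..1, ∫ y in (-1:ℝ)..1,
          (1 + α*y + β*x) * f (x + α*(x*y), y + β*(x*y)) := by
  rw [← image_eq hα hβ hαβ]
  rw [integral_image_eq_integral_abs_det_fderiv_smul volume measurableSet_Sq
    (fun p _ => (hasFDerivAt_Tmap α β p).hasFDerivWithinAt) (injOn_Tmap hα hβ hαβ) f]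
  have hcongr : ∀ p ∈ Sq, |(Bmap α β p).det| • f (Tmap α β p)
      = (1 + α*p.2 + β*p.1) * f (Tmap α β p) := by
    intro p hp
    simp only [Sq, Set.mem_prod, Set.mem_Icc] at hp
    rw [det_Bmap, abs_of_pos (by nlinarith [hp.1.1, hp.1.2, hp.2.1, hp.2.2]), smul_eq_mul]
  rw [setIntegral_congr_fun measurableSet_Sq hcongr]
  have hint : IntegrableOn (fun p : ℝ × ℝ => (1 + α*p.2 + β*p.1) * f (Tmap α β p)) Sq volume :=
    (((by fun_prop : Continuous fun p : ℝ × ℝ => (1 + α*p.2 + β*p.1)).mul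
        (hf.comp (continuous_Tmap α β))).continuousOn).integrableOn_compact
      (isCompact_Icc.prod isCompact_Icc)
  rw [show (volume : Measure (ℝ × ℝ)) = (volume : Measure ℝ).prod volume from
    Measure.volume_eq_prod ℝ ℝ] at hint ⊢
  rw [Sq] at hint ⊢
  rw [setIntegral_prod _ hint]
  rw [intervalIntegral.integral_of_le (by norm_num : (-1:ℝ) ≤ 1),
    ← integral_Icc_eq_integral_Ioc]
  apply setIntegral_congr_fun measurableSet_Icc
  intro x _
  dsimp only
  rw [intervalIntegral.integral_of_le (by norm_num : (-1:ℝ) ≤ 1),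
    ← integral_Icc_eq_integral_Ioc]
  apply setIntegral_congr_fun measurableSet_Icc
  intro y _
  simp only [Tmap]

/- ### Explicit integrals over the quadrilateral -/

lemma quad_int_v {α β : ℝ} (hα : 0 < α) (hβ : 0 < β) (hαβ : α + β < 1)
    (c0 c1 c2 c3 c4 : ℝ) :
    ∫ p in Quad α β, (fun p : ℝ × ℝ => c0 + c1*p.2 + c2*p.1 + c3*p.2^2 + c4*p.1^2) p
      = 4*c0 + 4/3*c3 + 4/3*c4 + 4/3*β*c2 + 4/3*β^2*c3 + 4/3*α*c1 + 4/3*α^2*c4 := by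
  rw [integral_quad hα hβ hαβ _ (by fun_prop)]
  have hin : ∀ x : ℝ, (∫ y in (-1:ℝ)..1,
      (1 + α*y + β*x) * (fun p : ℝ × ℝ => c0 + c1*p.2 + c2*p.1 + c3*p.2^2 + c4*p.1^2)
        (x + α*(x*y), y + β*(x*y)))
      = 2*(c4*x^2 + c2*x + c0 + β*c4*x^3 + β*c2*x^2 + β*c0*x)
        + 2/3*(c3 + 3*β*c3*x + 3*β^2*c3*x^2 + β^3*c3*x^3 + α*c1 + α*β*c1*x
            + 3*α^2*c4*x^2 + α^2*c2*x + α^2*β*c4*x^3) := by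
    intro x
    rw [show (fun y : ℝ => (1 + α*y + β*x) *
        (fun p : ℝ × ℝ => c0 + c1*p.2 + c2*p.1 + c3*p.2^2 + c4*p.1^2)
          (x + α*(x*y), y + β*(x*y)))
      = fun y : ℝ =>
        (c4*x^2 + c2*x + c0 + β*c4*x^3 + β*c2*x^2 + β*c0*x)
        + (c1 + 2*β*c1*x + β^2*c1*x^2 + 3*α*c4*x^2 + 2*α*c2*x + α*c0 + 2*α*β*c4*x^3
            + α*β*c2*x^2)*y
        + (c3 + 3*β*c3*x + 3*β^2*c3*x^2 + β^3*c3*x^3 + α*c1 + α*β*c1*x + 3*α^2*c4*x^2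
            + α^2*c2*x + α^2*β*c4*x^3)*y^2
        + (α*c3 + 2*α*β*c3*x + α*β^2*c3*x^2 + α^3*c4*x^2)*y^3
      from funext fun y => by simp only; ring]
    exact intpoly3 _ _ _ _
  simp only [hin]
  rw [show (fun x : ℝ =>
      2*(c4*x^2 + c2*x + c0 + β*c4*x^3 + β*c2*x^2 + β*c0*x)
        + 2/3*(c3 + 3*β*c3*x + 3*β^2*c3*x^2 + β^3*c3*x^3 + α*c1 + α*β*c1*x
            + 3*α^2*c4*x^2 + α^2*c2*x + α^2*β*c4*x^3))
    = fun x : ℝ =>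
      (2/3*c3 + 2*c0 + 2/3*α*c1)
      + (2*c2 + 2*β*c3 + 2*β*c0 + 2/3*α*β*c1 + 2/3*α^2*c2)*x
      + (2*c4 + 2*β*c2 + 2*β^2*c3 + 2*α^2*c4)*x^2
      + (2*β*c4 + 2/3*β^3*c3 + 2/3*α^2*β*c4)*x^3
    from funext fun x => by ring]
  rw [intpoly3]
  ring

lemma volume_quad {α β : ℝ} (hα : 0 < α) (hβ : 0 < β) (hαβ : α + β < 1) :
    (volume (Quad α β)).toReal = 4 := by
  have h1 : ∫ _ in Quad α β, (1:ℝ) = (volume (Quad α β)).toReal := by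
    rw [setIntegral_const]; simp; rfl
  rw [← h1, integral_quad hα hβ hαβ _ continuous_const]
  have hin : ∀ x : ℝ, (∫ y in (-1:ℝ)..1, (1 + α*y + β*x) * (1:ℝ)) = 2*(1 + β*x) := by
    intro x
    rw [show (fun y : ℝ => (1 + α*y + β*x) * (1:ℝ))
      = fun y : ℝ => (1 + β*x) + α*y + 0*y^2 + 0*y^3 from funext fun y => by ring]
    rw [intpoly3]; ring
  simp only [hin]
  rw [show (fun x : ℝ => 2*(1 + β*x)) = fun x : ℝ => 2 + (2*β)*x + 0*x^2 + 0*x^3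
    from funext fun x => by ring]
  rw [intpoly3]; norm_num

/- ### Membership in the shape function space -/

lemma mem_QLTZspace (v : ℝ × ℝ → ℝ) (hv : v ∈ QLTZspace) :
    ∃ c0 c1 c2 c3 c4 : ℝ,
      v = fun p : ℝ × ℝ => c0 + c1*p.2 + c2*p.1 + c3*p.2^2 + c4*p.1^2 := by
  simp only [QLTZspace, Submodule.mem_span_insert, Submodule.mem_span_singleton] at hv
  obtain ⟨e0, _, ⟨e1, _, ⟨e2, _, ⟨e3, _, ⟨e4, rfl⟩, rfl⟩, rfl⟩, rfl⟩, rfl⟩ := hv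
  refine ⟨e0, e1, e2, e3, e4, funext fun p => ?_⟩
  simp only [Pi.add_apply, Pi.smul_apply, smul_eq_mul]
  ring

end QLTZaux

open QLTZaux

/-- Reproduction property of the QLTZ nodal interpolation: every v in
V = span{1, ξ, η, ξ², η²} satisfies v = (⨍_Q v)·φ₀ + Σᵢ (⨍_{eᵢ} v)·φᵢ, i.e. the
interpolation Π_Q w = (⨍_Q w)·φ₀ + Σᵢ (⨍_{eᵢ} w)·φᵢ reproduces V. -/
theorem QLTZ_interpolation_reproduces (α β : ℝ) (hα : 0 < α) (hβ : 0 < β)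
    (hαβ : α + β < 1) :
    ∀ v ∈ QLTZspace, v = fun p =>
      quadAvg α β v * phi0 α β p +
      edgeAvg (a1 α β) (a2 α β) v * phi1 α β p +
      edgeAvg (a2 α β) (a3 α β) v * phi2 α β p +
      edgeAvg (a3 α β) (a4 α β) v * phi3 α β p +
      edgeAvg (a4 α β) (a1 α β) v * phi4 α β p := by
  intro v hv
  obtain ⟨c0, c1, c2, c3, c4, rfl⟩ := mem_QLTZspace v hv
  have hQA : quadAvg α β (fun p : ℝ × ℝ => c0 + c1*p.2 + c2*p.1 + c3*p.2^2 + c4*p.1^2)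
      = (4*c0 + 4/3*c3 + 4/3*c4 + 4/3*β*c2 + 4/3*β^2*c3 + 4/3*α*c1 + 4/3*α^2*c4)/4 := by
    rw [quadAvg, volume_quad hα hβ hαβ, quad_int_v hα hβ hαβ]
  have hE1 := edgeAvg_poly (a1 α β) (a2 α β) c0 c1 c2 c3 c4
  have hE2 := edgeAvg_poly (a2 α β) (a3 α β) c0 c1 c2 c3 c4
  have hE3 := edgeAvg_poly (a3 α β) (a4 α β) c0 c1 c2 c3 c4
  have hE4 := edgeAvg_poly (a4 α β) (a1 α β) c0 c1 c2 c3 c4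
  funext p
  rw [hQA, hE1, hE2, hE3, hE4, phi1, phi2, phi3, phi4, phi0]
  simp only [a1, a2, a3, a4]
  have hD : (2:ℝ) * (α^2 + β^2 + 3) ≠ 0 := by positivity
  field_simp
  ring
end
end
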